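/- Let {α_i mod I_i}_{i=1}^k be an exact covering system of O_K, let I_j be a division maximal modulus, and with S_{I_j} as above set J = { i : (α_i + I_i) ∩ S_{I_j} ≠ ∅ }. Then {α_i mod (I_i + I_j) : i ∈ J} is again an exact covering system of O_K. -/

import Mathlib

open NumberField

set_option synthInstance.maxHeartbeats 1000000
set_option linter.unusedSectionVars false
set_option maxHeartbeats 1000000

section IECAux

variable {R : Type*} [CommRing R] [IsDomain R] [IsDedekindDomain R]

lemma iec_sup_mem {I A B : Ideal R} (hAB : A ⊔ B = ⊤) {z : R}
    (ha : z ∈ I ⊔ A) (hb : z ∈ I ⊔ B) : z ∈ I ⊔ A * B := by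
  have h1 : (1 : R) ∈ A ⊔ B := hAB ▸ Submodule.mem_top
  obtain ⟨a, haA, b, hbB, hab⟩ := Submodule.mem_sup.mp h1
  have hz : z = z * a + z * b := by rw [← mul_add, hab, mul_one]
  have key1 : ((I ⊔ B)) * A ≤ I ⊔ A * B := by
    rw [Ideal.sup_mul]
    exact sup_le (le_trans Ideal.mul_le_left le_sup_left)
      (le_trans (le_of_eq (mul_comm _ _)) le_sup_right)
  have key2 : ((I ⊔ A)) * B ≤ I ⊔ A * B := by
    rw [Ideal.sup_mul]
    exact sup_le (le_trans Ideal.mul_le_left le_sup_left) le_sup_right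
  rw [hz]
  exact Ideal.add_mem _ (key1 (Ideal.mul_mem_mul hb haA))
    (key2 (Ideal.mul_mem_mul ha hbB))

lemma iec_mem_sup_prod {ι : Type*} [DecidableEq ι] (Q : ι → Ideal R)
    (hco : ∀ i j, i ≠ j → IsCoprime (Q i) (Q j)) (I : Ideal R) (T : Finset ι) {z : R}
    (h : ∀ j ∈ T, z ∈ I ⊔ Q j) : z ∈ I ⊔ ∏ j ∈ T, Q j := by
  induction T using Finset.induction_on with
  | empty => simp
  | insert _ _ ha ih =>
    rename_i a T'
    rw [Finset.prod_insert ha]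
    have hcop : IsCoprime (Q a) (∏ j ∈ T', Q j) :=
      IsCoprime.prod_right fun j hj => hco a j (fun he => ha (he ▸ hj))
    exact iec_sup_mem (Ideal.isCoprime_iff_sup_eq.mp hcop)
      (h a (Finset.mem_insert_self a T'))
      (ih fun j hj => h j (Finset.mem_insert_of_mem hj))

variable {𝔭 : Ideal R} (hp : 𝔭.IsPrime) (hpb : 𝔭 ≠ ⊥) {t : R} (ht : t ∈ 𝔭) (ht2 : t ∉ 𝔭 ^ 2)

include hp hpb ht ht2

lemma iec_exists_J : ∃ J : Ideal R, Ideal.span {t} = 𝔭 * J ∧ IsCoprime 𝔭 J := by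
  obtain ⟨J, hJ⟩ := Ideal.dvd_iff_le.mpr ((Ideal.span_singleton_le_iff_mem _).mpr ht)
  refine ⟨J, hJ, ?_⟩
  rw [Ideal.isCoprime_iff_sup_eq]
  by_contra hne
  have hm := hp.isMaximal hpb
  have heq : 𝔭 = 𝔭 ⊔ J := hm.eq_of_le hne le_sup_left
  have hJp : J ≤ 𝔭 := heq ▸ le_sup_right
  have : Ideal.span {t} ≤ 𝔭 ^ 2 := by
    rw [hJ, pow_two]
    exact Ideal.mul_mono_right hJp
  exact ht2 (this (Ideal.mem_span_singleton_self t))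

lemma iec_pow_le_span_sup (n : ℕ) :
    𝔭 ^ n ≤ Ideal.span {t ^ n} ⊔ 𝔭 ^ (n + 1) := by
  obtain ⟨J, hJ, hco⟩ := iec_exists_J hp hpb ht ht2
  have h1 : Ideal.span {t ^ n} = 𝔭 ^ n * J ^ n := by
    rw [← Ideal.span_singleton_pow, hJ, mul_pow]
  have h2 : J ^ n ⊔ 𝔭 = ⊤ :=
    Ideal.isCoprime_iff_sup_eq.mp hco.symm.pow_left
  have heq : 𝔭 ^ n = Ideal.span {t ^ n} ⊔ 𝔭 ^ (n + 1) := by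
    rw [← Ideal.mul_top (𝔭 ^ n), ← h2, Ideal.mul_sup, ← h1, ← pow_succ]
  exact le_of_eq heq

lemma iec_div {z : R} {n : ℕ} (hz : t * z ∈ 𝔭 ^ (n + 1)) : z ∈ 𝔭 ^ n := by
  obtain ⟨J, hJ, hco⟩ := iec_exists_J hp hpb ht ht2
  have hdvd : 𝔭 ^ (n + 1) ∣ Ideal.span {t * z} :=
    Ideal.dvd_iff_le.mpr ((Ideal.span_singleton_le_iff_mem _).mpr hz)
  rw [← Ideal.span_singleton_mul_span_singleton, hJ] at hdvd
  have hdvd2 : 𝔭 * 𝔭 ^ n ∣ 𝔭 * (J * Ideal.span {z}) := by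
    rw [← pow_succ']
    rwa [mul_assoc] at hdvd
  have hp0 : 𝔭 ≠ 0 := hpb
  have hdvd3 : 𝔭 ^ n ∣ J * Ideal.span {z} :=
    (mul_dvd_mul_iff_left hp0).mp hdvd2
  have : 𝔭 ^ n ∣ Ideal.span {z} :=
    (hco.pow_left).dvd_of_dvd_mul_left hdvd3
  exact (Ideal.span_singleton_le_iff_mem _).mp (Ideal.dvd_iff_le.mp this)

lemma iec_pow_not_mem (n : ℕ) : t ^ n ∉ 𝔭 ^ (n + 1) := by
  induction n with
  | zero =>
    intro h
    rw [zero_add, pow_one] at h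
    rw [pow_zero] at h
    exact hp.ne_top ((Ideal.eq_top_iff_one _).mpr h)
  | succ n ih =>
    intro h
    exact ih (iec_div hp hpb ht ht2 (by rwa [← pow_succ'] ))

lemma iec_div' {u z : R} {n : ℕ} (hu : u ∉ 𝔭) (hz : u * z ∈ 𝔭 ^ n) : z ∈ 𝔭 ^ n := by
  have hsup : 𝔭 ⊔ Ideal.span {u} = ⊤ := by
    by_contra hne
    have hm := hp.isMaximal hpb
    have heq : 𝔭 = 𝔭 ⊔ Ideal.span {u} := hm.eq_of_le hne le_sup_left
    exact hu (heq ▸ (le_sup_right : Ideal.span {u} ≤ 𝔭 ⊔ Ideal.span {u})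
      (Ideal.mem_span_singleton_self u))
  have hco : IsCoprime (𝔭 ^ n) (Ideal.span {u}) :=
    (Ideal.isCoprime_iff_sup_eq.mpr hsup).pow_left
  have hdvd : 𝔭 ^ n ∣ Ideal.span {u} * Ideal.span {z} := by
    rw [Ideal.span_singleton_mul_span_singleton]
    exact Ideal.dvd_iff_le.mpr ((Ideal.span_singleton_le_iff_mem _).mpr hz)
  exact (Ideal.span_singleton_le_iff_mem _).mp
    (Ideal.dvd_iff_le.mp (hco.dvd_of_dvd_mul_left hdvd))

variable {B : Set R} (hB : ∀ x : R, ∃! β : R, β ∈ B ∧ x - β ∈ 𝔭) (h0B : (0 : R) ∈ B)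

include hB h0B

lemma iec_digit_exists (x : R) (n : ℕ) :
    ∃ c : ℕ → R, (∀ m, c m ∈ B) ∧ x - ∑ m ∈ Finset.range n, c m * t ^ m ∈ 𝔭 ^ n := by
  induction n with
  | zero =>
    exact ⟨fun _ => 0, fun _ => h0B, by simp⟩
  | succ n ih =>
    obtain ⟨c, hc, hw⟩ := ih
    set w := x - ∑ m ∈ Finset.range n, c m * t ^ m with hwdef
    have hw2 : w ∈ Ideal.span {t ^ n} ⊔ 𝔭 ^ (n + 1) :=
      iec_pow_le_span_sup hp hpb ht ht2 n hw
    obtain ⟨a, haA, b, hbB', hab⟩ := Submodule.mem_sup.mp hw2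
    obtain ⟨u, hu⟩ := Ideal.mem_span_singleton'.mp haA
    obtain ⟨β, ⟨hβB, hβ⟩, -⟩ := hB u
    refine ⟨Function.update c n β, ?_, ?_⟩
    · intro m
      rcases eq_or_ne m n with rfl | hne
      · simpa using hβB
      · simpa [Function.update_of_ne hne] using hc m
    · have hsum : ∑ m ∈ Finset.range (n + 1), Function.update c n β m * t ^ m
          = (∑ m ∈ Finset.range n, c m * t ^ m) + β * t ^ n := by
        rw [Finset.sum_range_succ]
        congr 1
        · apply Finset.sum_congr rfl
          intro m hm
          rw [Function.update_of_ne (Nat.ne_of_lt (Finset.mem_range.mp hm))]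
        · simp
      rw [hsum]
      rw [hwdef] at hab
      have hthis : x - ((∑ m ∈ Finset.range n, c m * t ^ m) + β * t ^ n)
          = (u - β) * t ^ n + b := by linear_combination -hab - hu
      rw [hthis]
      refine Ideal.add_mem _ ?_ hbB'
      have h1 : (u - β) * t ^ n ∈ 𝔭 * 𝔭 ^ n :=
        Ideal.mul_mem_mul hβ (Ideal.pow_mem_pow ht n)
      rwa [← pow_succ'] at h1

lemma iec_digit_unique :
    ∀ (n : ℕ) (c d : ℕ → R), (∀ m, c m ∈ B) → (∀ m, d m ∈ B) →
      (∑ m ∈ Finset.range n, c m * t ^ m) - (∑ m ∈ Finset.range n, d m * t ^ m) ∈ 𝔭 ^ n →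
      ∀ m < n, c m = d m := by
  intro n
  induction n with
  | zero => intro c d _ _ _ m hm; omega
  | succ n ih =>
    intro c d hc hd hsum m hm
    have hsplit : (∑ m ∈ Finset.range (n+1), c m * t ^ m)
          - (∑ m ∈ Finset.range (n+1), d m * t ^ m)
        = (c 0 - d 0) + t * ∑ i ∈ Finset.range n, (c (i+1) - d (i+1)) * t ^ i := by
      rw [Finset.sum_range_succ' (fun m => c m * t ^ m) n,
          Finset.sum_range_succ' (fun m => d m * t ^ m) n]
      rw [Finset.mul_sum]
      have : ∀ i, t * ((c (i+1) - d (i+1)) * t ^ i) = c (i+1) * t ^ (i+1) - d (i+1) * t ^ (i+1) := by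
        intro i; ring
      simp only [this]
      rw [Finset.sum_sub_distrib]
      ring
    have hle : 𝔭 ^ (n + 1) ≤ 𝔭 := by
      have h1 : 𝔭 ^ (n + 1) ≤ 𝔭 ^ 1 := Ideal.pow_le_pow_right (by omega)
      rwa [pow_one] at h1
    have hdiffp : (∑ m ∈ Finset.range (n+1), c m * t ^ m)
        - (∑ m ∈ Finset.range (n+1), d m * t ^ m) ∈ 𝔭 := hle hsum
    rw [hsplit] at hdiffp
    have hc0 : c 0 = d 0 := by
      have hmem : c 0 - d 0 ∈ 𝔭 := by
        have h2 : t * ∑ i ∈ Finset.range n, (c (i+1) - d (i+1)) * t ^ i ∈ 𝔭 :=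
          Ideal.mul_mem_right _ _ ht
        simpa using Ideal.sub_mem _ hdiffp h2
      exact ((hB (c 0)).unique ⟨hc 0, by simp⟩ ⟨hd 0, hmem⟩)
    have htrest : t * ∑ i ∈ Finset.range n, (c (i+1) - d (i+1)) * t ^ i ∈ 𝔭 ^ (n + 1) := by
      have heq : t * ∑ i ∈ Finset.range n, (c (i+1) - d (i+1)) * t ^ i
          = (∑ m ∈ Finset.range (n+1), c m * t ^ m)
            - (∑ m ∈ Finset.range (n+1), d m * t ^ m) := by
        rw [hsplit, hc0]; ring
      rw [heq]; exact hsum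
    have hrest : ∑ i ∈ Finset.range n, (c (i+1) - d (i+1)) * t ^ i ∈ 𝔭 ^ n :=
      iec_div hp hpb ht ht2 htrest
    have hrest' : (∑ i ∈ Finset.range n, c (i+1) * t ^ i)
        - (∑ i ∈ Finset.range n, d (i+1) * t ^ i) ∈ 𝔭 ^ n := by
      have heq2 : (∑ i ∈ Finset.range n, c (i+1) * t ^ i)
          - (∑ i ∈ Finset.range n, d (i+1) * t ^ i)
          = ∑ i ∈ Finset.range n, (c (i+1) - d (i+1)) * t ^ i := by
        rw [← Finset.sum_sub_distrib]
        exact Finset.sum_congr rfl fun i _ => by ring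
      rw [heq2]; exact hrest
    have ih' := ih (fun m => c (m+1)) (fun m => d (m+1)) (fun m => hc (m+1))
      (fun m => hd (m+1)) hrest'
    match m, hm with
    | 0, _ => exact hc0
    | (m+1), hm => exact ih' m (by omega)

end IECAux

/-- Let `{α_i mod I_i}` be an exact covering system of `𝓞 K` with
`⨅ I_i = ∏ 𝔭_j ^ r_j`, let `I j₀` be a division maximal modulus with
`I j₀ = ∏ 𝔭_j ^ s_j`, and let `S_{I j₀}` be the set of digit-representatives of
`𝓞 K / ⨅ I_i` whose digits in positions `≥ s_j` vanish. With
`J = { i : (α_i + I_i) ∩ S_{I j₀} ≠ ∅ }`, the family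
`{α_i mod (I_i + I j₀) : i ∈ J}` is again an exact covering system of `𝓞 K`. -/
theorem induced_exact_cover {K : Type*} [Field K] [NumberField K]
    {k l : ℕ} (α : Fin k → 𝓞 K) (I : Fin k → Ideal (𝓞 K))
    (hbot : ∀ i, I i ≠ ⊥) (htop : ∀ i, I i ≠ ⊤)
    (hcover : ∀ x : 𝓞 K, ∃! i : Fin k, x - α i ∈ I i)
    (𝔭 : Fin l → Ideal (𝓞 K)) (hprime : ∀ j, (𝔭 j).IsPrime)
    (hpbot : ∀ j, 𝔭 j ≠ ⊥) (hpinj : Function.Injective 𝔭)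
    (r : Fin l → ℕ) (hr : ∀ j, 0 < r j)
    (hI : (⨅ i, I i) = ∏ j, 𝔭 j ^ r j)
    (t : Fin l → 𝓞 K) (ht : ∀ j, t j ∈ 𝔭 j) (ht2 : ∀ j, t j ∉ 𝔭 j ^ 2)
    (B : Fin l → Set (𝓞 K))
    (hB : ∀ j, ∀ x : 𝓞 K, ∃! β : 𝓞 K, β ∈ B j ∧ x - β ∈ 𝔭 j)
    (h0B : ∀ j, (0 : 𝓞 K) ∈ B j)
    (S : Set (𝓞 K))
    (hS : ∀ x : 𝓞 K, ∃! y : 𝓞 K, y ∈ S ∧ x - y ∈ (∏ j, 𝔭 j ^ r j : Ideal (𝓞 K)))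
    (j₀ : Fin k) (hdm : ∀ i : Fin k, I j₀ ∣ I i → I i = I j₀)
    (s : Fin l → ℕ) (hs : I j₀ = ∏ j, 𝔭 j ^ s j) :
    ∀ x : 𝓞 K, ∃! i : Fin k,
      (∃ y : 𝓞 K, (y - α i ∈ I i) ∧ y ∈ S ∧
          (∀ j, ∃ c : ℕ → 𝓞 K, (∀ m, c m ∈ B j) ∧
            y - ∑ m ∈ Finset.range (s j), c m * t j ^ m ∈ 𝔭 j ^ r j)) ∧
        x - α i ∈ I i + I j₀ := by
  classical
  intro x
  have hPle : ∀ i, (∏ j, 𝔭 j ^ r j) ≤ I i := fun i => hI ▸ iInf_le I i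
  have hcop : ∀ (a b : Fin l → ℕ) (i j : Fin l), i ≠ j → IsCoprime (𝔭 i ^ a i) (𝔭 j ^ b j) := by
    intro a b i j hij
    exact IsCoprime.pow (Ideal.isCoprime_iff_sup_eq.mpr
      (((hprime i).isMaximal (hpbot i)).coprime_of_ne ((hprime j).isMaximal (hpbot j))
        fun h => hij (hpinj h)))
  have hmem_prod : ∀ (a : Fin l → ℕ) (z : 𝓞 K), (∀ j, z ∈ 𝔭 j ^ a j) → z ∈ ∏ j, 𝔭 j ^ a j := by
    intro a z hz
    have h := iec_mem_sup_prod (fun j => 𝔭 j ^ a j) (fun i j hij => hcop a a i j hij) ⊥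
      Finset.univ (fun j _ => Submodule.mem_sup_right (hz j))
    simpa using h
  have hprod_le : ∀ (a : Fin l → ℕ) (j : Fin l), (∏ m, 𝔭 m ^ a m) ≤ 𝔭 j ^ a j :=
    fun a j => le_trans Ideal.prod_le_inf (Finset.inf_le (Finset.mem_univ j))
  -- s ≤ r
  have hsr : ∀ j, s j ≤ r j := by
    intro j
    by_contra hlt
    push_neg at hlt
    have hQ : ¬ ((∏ m ∈ Finset.univ.erase j, 𝔭 m ^ r m) ≤ 𝔭 j) := by
      intro hle
      obtain ⟨m, hm, hle2⟩ := (Ideal.IsPrime.prod_le (hprime j)).mp hle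
      haveI := hprime j
      have hle3 : 𝔭 m ≤ 𝔭 j := (Ideal.IsPrime.pow_le_iff (Nat.pos_iff_ne_zero.mp (hr m))).mp hle2
      have heq : 𝔭 m = 𝔭 j := ((hprime m).isMaximal (hpbot m)).eq_of_le (hprime j).ne_top hle3
      exact (Finset.mem_erase.mp hm).1 (hpinj heq)
    obtain ⟨u, huQ, huj⟩ := SetLike.not_le_iff_exists.mp hQ
    have hw : u * t j ^ r j ∈ ∏ m, 𝔭 m ^ r m := by
      apply hmem_prod r
      intro m
      rcases eq_or_ne m j with rfl | hmne
      · exact Ideal.mul_mem_left _ u (Ideal.pow_mem_pow (ht m) (r m))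
      · have hle4 : (∏ m' ∈ Finset.univ.erase j, 𝔭 m' ^ r m') ≤ 𝔭 m ^ r m :=
          le_trans Ideal.prod_le_inf
            (Finset.inf_le (Finset.mem_erase.mpr ⟨hmne, Finset.mem_univ m⟩))
        exact Ideal.mul_mem_right _ _ (hle4 huQ)
    have hw2 : u * t j ^ r j ∈ 𝔭 j ^ (r j + 1) := by
      have h1 : (∏ m, 𝔭 m ^ r m) ≤ I j₀ := hPle j₀
      have h2 : I j₀ ≤ 𝔭 j ^ s j := hs ▸ hprod_le s j
      have h3 : 𝔭 j ^ s j ≤ 𝔭 j ^ (r j + 1) := Ideal.pow_le_pow_right (by omega)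
      exact h3 (h2 (h1 hw))
    exact iec_pow_not_mem (hprime j) (hpbot j) (ht j) (ht2 j) (r j)
      (iec_div' (hprime j) (hpbot j) (ht j) (ht2 j) huj hw2)
  -- digits of x at each prime, truncated at s j
  have hdig := fun j =>
    iec_digit_exists (hprime j) (hpbot j) (ht j) (ht2 j) (hB j) (h0B j) x (s j)
  choose c hcB hcx using hdig
  set w : Fin l → 𝓞 K := fun j => ∑ m ∈ Finset.range (s j), c j m * t j ^ m with hwdef
  -- CRT: find z congruent to w j mod 𝔭 j ^ r j
  have hpair : Pairwise (Function.onFun IsCoprime fun j => 𝔭 j ^ r j) := fun i j hij => hcop r r i j hij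
  obtain ⟨q, hq⟩ := Ideal.quotientInfToPiQuotient_surj hpair
    (fun j => Ideal.Quotient.mk _ (w j))
  obtain ⟨z, rfl⟩ := Ideal.Quotient.mk_surjective q
  have hzw : ∀ j, z - w j ∈ 𝔭 j ^ r j := by
    intro j
    have h := congrFun hq j
    rw [Ideal.quotientInfToPiQuotient_mk'] at h
    exact Ideal.Quotient.eq.mp h
  -- representative in S
  obtain ⟨y, ⟨hyS, hzy⟩, -⟩ := hS z
  have hyd : ∀ j, ∃ cc : ℕ → 𝓞 K, (∀ m, cc m ∈ B j) ∧
      y - ∑ m ∈ Finset.range (s j), cc m * t j ^ m ∈ 𝔭 j ^ r j := by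
    intro j
    refine ⟨c j, hcB j, ?_⟩
    have h1 : y - z ∈ 𝔭 j ^ r j := by
      have h := neg_mem hzy
      rw [neg_sub] at h
      exact hprod_le r j h
    have h2 := hzw j
    have he : y - w j = (y - z) + (z - w j) := by ring
    rw [he]
    exact Ideal.add_mem _ h1 h2
  have hxy : x - y ∈ I j₀ := by
    rw [hs]
    apply hmem_prod s
    intro j
    have h1 : x - w j ∈ 𝔭 j ^ s j := hcx j
    have h2 : w j - z ∈ 𝔭 j ^ s j := by
      have h := neg_mem (hzw j)
      rw [neg_sub] at h
      exact (Ideal.pow_le_pow_right (hsr j)) h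
    have h3 : z - y ∈ 𝔭 j ^ s j := (Ideal.pow_le_pow_right (hsr j)) (hprod_le r j hzy)
    have he : x - y = ((x - w j) + (w j - z)) + (z - y) := by ring
    rw [he]
    exact Ideal.add_mem _ (Ideal.add_mem _ h1 h2) h3
  obtain ⟨i₀, hi₀, hi₀u⟩ := hcover y
  have hkey : ∀ (i : Fin k),
      ((∃ y' : 𝓞 K, (y' - α i ∈ I i) ∧ y' ∈ S ∧
          (∀ j, ∃ cc : ℕ → 𝓞 K, (∀ m, cc m ∈ B j) ∧
            y' - ∑ m ∈ Finset.range (s j), cc m * t j ^ m ∈ 𝔭 j ^ r j)) ∧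
        x - α i ∈ I i + I j₀) → i = i₀ := by
    rintro i ⟨⟨y', h1, h2, h3⟩, h4⟩
    rw [Submodule.add_eq_sup] at h4
    have hz'sup : y - y' ∈ I i ⊔ I j₀ := by
      have ha : y - x ∈ I i ⊔ I j₀ := by
        apply Submodule.mem_sup_right
        have h := neg_mem hxy
        rwa [neg_sub] at h
      have hc : α i - y' ∈ I i ⊔ I j₀ := by
        apply Submodule.mem_sup_left
        have h := neg_mem h1
        rwa [neg_sub] at h
      have he : y - y' = ((y - x) + (x - α i)) + (α i - y') := by ring
      rw [he]
      exact Ideal.add_mem _ (Ideal.add_mem _ ha h4) hc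
    have hH : ∀ j, y - y' ∈ 𝔭 j ^ s j → y - y' ∈ 𝔭 j ^ r j := by
      intro j hmem
      obtain ⟨cc, hccB, hccy⟩ := hyd j
      obtain ⟨dd, hddB, hddy⟩ := h3 j
      have hdd : (∑ m ∈ Finset.range (s j), cc m * t j ^ m)
          - (∑ m ∈ Finset.range (s j), dd m * t j ^ m) ∈ 𝔭 j ^ s j := by
        have he : (∑ m ∈ Finset.range (s j), cc m * t j ^ m)
            - (∑ m ∈ Finset.range (s j), dd m * t j ^ m)
            = ((y - y') - (y - ∑ m ∈ Finset.range (s j), cc m * t j ^ m))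
              + (y' - ∑ m ∈ Finset.range (s j), dd m * t j ^ m) := by ring
        rw [he]
        exact Ideal.add_mem _
          (Ideal.sub_mem _ hmem ((Ideal.pow_le_pow_right (hsr j)) hccy))
          ((Ideal.pow_le_pow_right (hsr j)) hddy)
      have hdig_eq := iec_digit_unique (hprime j) (hpbot j) (ht j) (ht2 j) (hB j) (h0B j)
        (s j) cc dd hccB hddB hdd
      have hsums : (∑ m ∈ Finset.range (s j), cc m * t j ^ m)
          = ∑ m ∈ Finset.range (s j), dd m * t j ^ m :=
        Finset.sum_congr rfl fun m hm => by rw [hdig_eq m (Finset.mem_range.mp hm)]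
      rw [← hsums] at hddy
      have he2 : y - y' = (y - ∑ m ∈ Finset.range (s j), cc m * t j ^ m)
          - (y' - ∑ m ∈ Finset.range (s j), cc m * t j ^ m) := by ring
      rw [he2]
      exact Ideal.sub_mem _ hccy hddy
    have hz'Ii : y - y' ∈ I i := by
      have hall : ∀ j ∈ Finset.univ, y - y' ∈ I i ⊔ 𝔭 j ^ r j := by
        intro j _
        by_cases hcase : I i ≤ 𝔭 j ^ s j
        · have hsub : I i ⊔ I j₀ ≤ 𝔭 j ^ s j := sup_le hcase (hs ▸ hprod_le s j)
          exact Submodule.mem_sup_right (hH j (hsub hz'sup))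
        · have hdvd : (I i ⊔ 𝔭 j ^ r j) ∣ 𝔭 j ^ r j := Ideal.dvd_iff_le.mpr le_sup_right
          obtain ⟨i', hi'le, hassoc⟩ :=
            (dvd_prime_pow (Ideal.prime_of_isPrime (hpbot j) (hprime j)) (r j)).mp hdvd
          obtain ⟨uu, huu⟩ := hassoc
          have huu1 : (uu : Ideal (𝓞 K)) = ⊤ := Ideal.isUnit_iff.mp uu.isUnit
          have hAeq : I i ⊔ 𝔭 j ^ r j = 𝔭 j ^ i' := by rw [← huu, huu1, Ideal.mul_top]
          have hi's : i' ≤ s j := by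
            by_contra hgt
            push_neg at hgt
            apply hcase
            calc I i ≤ I i ⊔ 𝔭 j ^ r j := le_sup_left
            _ = 𝔭 j ^ i' := hAeq
            _ ≤ 𝔭 j ^ s j := Ideal.pow_le_pow_right (le_of_lt hgt)
          have hJ0A : I j₀ ≤ I i ⊔ 𝔭 j ^ r j := by
            rw [hAeq, hs]
            exact le_trans (hprod_le s j) (Ideal.pow_le_pow_right hi's)
          exact (sup_le le_sup_left hJ0A) hz'sup
      have hzz := iec_mem_sup_prod (fun j => 𝔭 j ^ r j) (fun a b hab => hcop r r a b hab)
        (I i) Finset.univ hall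
      rwa [sup_eq_left.mpr (hPle i)] at hzz
    have hyi : y - α i ∈ I i := by
      have he : y - α i = (y - y') + (y' - α i) := by ring
      rw [he]
      exact Ideal.add_mem _ hz'Ii h1
    exact hi₀u i hyi
  refine ⟨i₀, ⟨⟨y, hi₀, hyS, hyd⟩, ?_⟩, hkey⟩
  rw [Submodule.add_eq_sup]
  have he : x - α i₀ = (y - α i₀) + (x - y) := by ring
  rw [he]
  exact Ideal.add_mem _ (Submodule.mem_sup_left hi₀) (Submodule.mem_sup_right hxy)
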